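/- arXiv:2510.25513 — 2 statements merged into one kernel-verified Lean document; each statement's English description precedes it below -/
import Mathlib

section
/- Let (Ω, P) be a probability space and (w_k)_{k∈ℕ} an i.i.d. sequence of real random variables, each distributed according to the uniform probability measure on [−1, 1]. Fix x₀ ∈ ℝ with |x₀| > 4 and define the random trajectory X₀ = x₀, X_{k+1}(ω) = X_k(ω) + X_k(ω)² · w_k(ω). Then P(∀ k ∈ ℕ, |X_k| > 2^{k+2}) ≥ e^{−2}; in particular P(|X_k| → ∞ as k → ∞) ≥ e^{−2} > 0, so the system is not almost-surely reachable to any bounded target set from x₀. -/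
open MeasureTheory ProbabilityTheory Filter

noncomputable def uniformPM : Measure ℝ :=
  (2 : ENNReal)⁻¹ • (volume.restrict (Set.Icc (-1 : ℝ) 1))

def trajOneDim {Ω : Type*} (w : ℕ → Ω → ℝ) (x₀ : ℝ) : ℕ → Ω → ℝ
  | 0 => fun _ => x₀
  | k + 1 => fun ω => trajOneDim w x₀ k ω + (trajOneDim w x₀ k ω) ^ 2 * w k ω

instance : IsProbabilityMeasure uniformPM := by
  constructor
  simp [uniformPM, Real.volume_Icc]
  rw [show (1 : ℝ) + 1 = 2 by norm_num, ENNReal.ofReal_ofNat]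
  exact ENNReal.inv_mul_cancel (by norm_num) (by norm_num)

def trajVec (x₀ : ℝ) : (n : ℕ) → (Fin n → ℝ) → ℝ
  | 0, _ => x₀
  | n+1, v => trajVec x₀ n (Fin.init v) + (trajVec x₀ n (Fin.init v)) ^ 2 * v (Fin.last n)

lemma trajVec_measurable (x₀ : ℝ) : ∀ n, Measurable (trajVec x₀ n)
  | 0 => measurable_const
  | n+1 => by
    have hinit : Measurable (fun v : Fin (n+1) → ℝ => Fin.init v) :=
      measurable_pi_lambda _ fun i => measurable_pi_apply _
    have h : Measurable (fun v : Fin (n+1) → ℝ => trajVec x₀ n (Fin.init v)) :=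
      (trajVec_measurable x₀ n).comp hinit
    exact h.add ((h.pow_const 2).mul (measurable_pi_apply _))

lemma traj_eq {Ω : Type*} (w : ℕ → Ω → ℝ) (x₀ : ℝ) :
    ∀ n ω, trajOneDim w x₀ n ω = trajVec x₀ n (fun i : Fin n => w i ω)
  | 0, ω => rfl
  | n+1, ω => by
    have h : (Fin.init fun i : Fin (n+1) => w i ω) = fun i : Fin n => w i ω := by
      funext i; simp [Fin.init]
    show trajOneDim w x₀ n ω + (trajOneDim w x₀ n ω) ^ 2 * w n ω = _
    rw [traj_eq w x₀ n ω]
    simp only [trajVec, h, Fin.val_last]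

lemma trajOneDim_measurable {Ω : Type*} [MeasurableSpace Ω] (w : ℕ → Ω → ℝ)
    (hw : ∀ k, Measurable (w k)) (x₀ : ℝ) (n : ℕ) :
    Measurable (trajOneDim w x₀ n) := by
  have : (trajOneDim w x₀ n) = fun ω => trajVec x₀ n (fun i : Fin n => w i ω) := by
    funext ω; exact traj_eq w x₀ n ω
  rw [this]
  exact (trajVec_measurable x₀ n).comp (measurable_pi_lambda _ fun i => hw i)

lemma exp_le_one_sub {t : ℝ} (ht0 : 0 ≤ t) (ht : t ≤ 1/2) :
    Real.exp (-(2*t)) ≤ 1 - t := by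
  have h1 : (1:ℝ) + 2*t ≤ Real.exp (2*t) := by
    have := Real.add_one_le_exp (2*t); linarith
  have hpos : (0:ℝ) < 1 + 2*t := by linarith
  have h2 : Real.exp (-(2*t)) = (Real.exp (2*t))⁻¹ := by rw [Real.exp_neg]
  rw [h2]
  have h3 : (Real.exp (2*t))⁻¹ ≤ (1 + 2*t)⁻¹ := by
    apply inv_anti₀ hpos h1
  refine h3.trans ?_
  rw [inv_le_iff_one_le_mul₀ hpos] at *
  · nlinarith

lemma unif_bound (x : ℝ) (hx : 0 < |x|) :
    1 - ENNReal.ofReal (2/|x|) ≤ uniformPM {t : ℝ | 2 ≤ |1 + x * t|} := by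
  have hx0 : x ≠ 0 := abs_pos.mp hx
  set S := {t : ℝ | 2 ≤ |1 + x * t|} with hSdef
  have hmeas : Measurable fun t : ℝ => |1 + x * t| :=
    (measurable_const.add (measurable_const.mul measurable_id)).abs
  have hS : MeasurableSet S := measurableSet_le measurable_const hmeas
  have hsub : Sᶜ ⊆ Metric.ball (-x⁻¹) (2/|x|) := by
    intro t ht
    simp only [Set.mem_compl_iff, hSdef, Set.mem_setOf_eq, not_le] at ht
    rw [Metric.mem_ball, Real.dist_eq, show t - -x⁻¹ = t + x⁻¹ by ring, lt_div_iff₀ hx]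
    calc |t + x⁻¹| * |x| = |(t + x⁻¹) * x| := (abs_mul _ _).symm
      _ = |1 + x * t| := by rw [show (t + x⁻¹) * x = 1 + x * t by field_simp; ring]
      _ < 2 := ht
  have hcompl : uniformPM Sᶜ ≤ ENNReal.ofReal (2/|x|) := by
    calc uniformPM Sᶜ ≤ uniformPM (Metric.ball (-x⁻¹) (2/|x|)) := measure_mono hsub
      _ ≤ 2⁻¹ * volume (Metric.ball (-x⁻¹) (2/|x|)) := by
          rw [uniformPM]
          simp only [Measure.smul_apply, smul_eq_mul]
          exact mul_le_mul_right (Measure.restrict_apply_le _ _) _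
      _ = ENNReal.ofReal (2/|x|) := by
          rw [Real.volume_ball, ENNReal.ofReal_mul (by norm_num : (0:ℝ) ≤ 2)]
          rw [ENNReal.ofReal_ofNat, ← mul_assoc, ENNReal.inv_mul_cancel (by norm_num) (by norm_num),
            one_mul]
  have h1 : uniformPM S = 1 - uniformPM Sᶜ := by
    rw [← compl_compl S] ; rw [prob_compl_eq_one_sub hS.compl, compl_compl]
  rw [h1]
  exact tsub_le_tsub_left hcompl 1

lemma prod_lb (n : ℕ) : Real.exp (-2) ≤ ∏ j ∈ Finset.range n, (1 - (1/2:ℝ)^(j+1)) := by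
  have hsum : ∑ j ∈ Finset.range n, (1/2:ℝ)^(j+1) ≤ 1 := by
    have h := sum_geometric_two_le n
    have h2 : ∑ j ∈ Finset.range n, (1/2:ℝ)^(j+1)
        = (1/2) * ∑ j ∈ Finset.range n, (1/2:ℝ)^j := by
      rw [Finset.mul_sum]; exact Finset.sum_congr rfl fun j _ => by ring
    rw [h2]; linarith
  calc Real.exp (-2) ≤ Real.exp (∑ j ∈ Finset.range n, -(2*(1/2:ℝ)^(j+1))) := by
        apply Real.exp_le_exp.mpr
        have h3 : ∑ j ∈ Finset.range n, -(2*(1/2:ℝ)^(j+1))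
            = -(2 * ∑ j ∈ Finset.range n, (1/2:ℝ)^(j+1)) := by
          rw [Finset.mul_sum, ← Finset.sum_neg_distrib]
        rw [h3]; linarith
    _ = ∏ j ∈ Finset.range n, Real.exp (-(2*(1/2:ℝ)^(j+1))) := Real.exp_sum _ _
    _ ≤ ∏ j ∈ Finset.range n, (1 - (1/2:ℝ)^(j+1)) := by
        apply Finset.prod_le_prod (fun j _ => (Real.exp_pos _).le)
        intro j _
        apply exp_le_one_sub (by positivity)
        calc (1/2:ℝ)^(j+1) ≤ (1/2:ℝ)^1 :=
              pow_le_pow_of_le_one (by norm_num) (by norm_num) (Nat.succ_le_succ (Nat.zero_le j))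
          _ = 1/2 := pow_one _

lemma key_escape {Ω : Type*} [MeasurableSpace Ω] (P : Measure Ω) [IsProbabilityMeasure P]
    (w : ℕ → Ω → ℝ) (hwmeas : ∀ k, Measurable (w k))
    (hindep : iIndepFun w P)
    (hlaw : ∀ k, Measure.map (w k) P = uniformPM)
    (x₀ : ℝ) (hx₀ : 4 < |x₀|) :
    ENNReal.ofReal (Real.exp (-2)) ≤
      P {ω | ∀ k : ℕ, 2^k * |x₀| ≤ |trajOneDim w x₀ k ω|} := by
  set X := trajOneDim w x₀ with hX
  have hXmeas : ∀ k, Measurable (X k) := fun k => trajOneDim_measurable w hwmeas x₀ k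
  set A : ℕ → Set Ω := fun n => {ω | ∀ k, k ≤ n → 2^k * |x₀| ≤ |X k ω|} with hA
  have hAmeas : ∀ n, MeasurableSet (A n) := by
    intro n
    have h : A n = ⋂ k, ⋂ _ : k ≤ n, {ω | 2^k * |x₀| ≤ |X k ω|} := by
      ext ω; simp [hA]
    rw [h]
    exact MeasurableSet.iInter fun k => MeasurableSet.iInter fun _ =>
      measurableSet_le measurable_const (hXmeas k).abs
  -- the inductive step
  have hstep : ∀ n, ENNReal.ofReal (1 - (1/2:ℝ)^(n+1)) * P (A n) ≤ P (A (n+1)) := by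
    intro n
    set U : Ω → (Fin n → ℝ) := fun ω i => w i ω with hU
    have hUmeas : Measurable U := measurable_pi_lambda _ fun i => hwmeas i
    set Dn : Set (Fin n → ℝ) :=
      {v | ∀ k, ∀ h : k ≤ n,
        2^k * |x₀| ≤ |trajVec x₀ k (fun i : Fin k => v (Fin.castLE h i))|} with hDn
    have hDmeas : MeasurableSet Dn := by
      have h : Dn = ⋂ k, ⋂ h : k ≤ n,
          {v | 2^k * |x₀| ≤ |trajVec x₀ k (fun i : Fin k => v (Fin.castLE h i))|} := by
        ext v; simp [hDn]
      rw [h]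
      refine MeasurableSet.iInter fun k => MeasurableSet.iInter fun h => ?_
      exact measurableSet_le measurable_const
        (((trajVec_measurable x₀ k).comp
          (measurable_pi_lambda _ fun i => measurable_pi_apply _)).abs)
    have hcast : ∀ (k : ℕ) (h : k ≤ n) (ω : Ω),
        (fun i : Fin k => U ω (Fin.castLE h i)) = fun i : Fin k => w i ω := fun k h ω => rfl
    have hpre : U ⁻¹' Dn = A n := by
      ext ω
      simp only [Set.mem_preimage, hDn, Set.mem_setOf_eq, hA]
      constructor
      · intro h k hk
        have := h k hk
        rwa [hcast k hk ω, ← traj_eq w x₀ k ω] at this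
      · intro h k hk
        rw [hcast k hk ω, ← traj_eq w x₀ k ω]
        exact h k hk
    set C : Set ((Fin n → ℝ) × ℝ) :=
      {p | p.1 ∈ Dn ∧
        2^(n+1) * |x₀| ≤ |trajVec x₀ n p.1 + (trajVec x₀ n p.1)^2 * p.2|} with hC
    have htm : Measurable fun p : (Fin n → ℝ) × ℝ => trajVec x₀ n p.1 :=
      (trajVec_measurable x₀ n).comp measurable_fst
    have hCmeas : MeasurableSet C := by
      refine (hDmeas.preimage measurable_fst).inter ?_
      exact measurableSet_le measurable_const
        ((htm.add ((htm.pow_const 2).mul measurable_snd)).abs)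
    have hApre : (fun ω => (U ω, w n ω)) ⁻¹' C = A (n+1) := by
      ext ω
      simp only [Set.mem_preimage, hC, Set.mem_setOf_eq, hA]
      have hxn : trajVec x₀ n (U ω) = X n ω := (traj_eq w x₀ n ω).symm
      have hxn1 : trajVec x₀ n (U ω) + (trajVec x₀ n (U ω))^2 * w n ω = X (n+1) ω := by
        rw [hxn]; rfl
      rw [hxn1]
      constructor
      · rintro ⟨h1, h2⟩ k hk
        rcases Nat.lt_or_ge k (n+1) with hlt | hge
        · have hk' : k ≤ n := Nat.lt_succ_iff.mp hlt
          have := h1 k hk'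
          rwa [hcast k hk' ω, ← traj_eq w x₀ k ω] at this
        · have : k = n + 1 := le_antisymm hk hge
          rwa [this]
      · intro h
        refine ⟨fun k hk => ?_, h (n+1) le_rfl⟩
        rw [hcast k hk ω, ← traj_eq w x₀ k ω]
        exact h k (hk.trans (Nat.le_succ n))
    -- independence of U and w n
    have hUW : IndepFun U (w n) P := by
      have h0 := hindep.indepFun_finset (Finset.range n) {n}
        (Finset.disjoint_singleton_right.mpr (by simp)) hwmeas
      have hg1 : Measurable fun (v : {x // x ∈ Finset.range n} → ℝ) (i : Fin n) =>
          v ⟨(i : ℕ), Finset.mem_range.mpr i.isLt⟩ :=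
        measurable_pi_lambda _ fun i => measurable_pi_apply _
      have hg2 : Measurable fun (v : {x // x ∈ ({n} : Finset ℕ)} → ℝ) =>
          v ⟨n, Finset.mem_singleton_self n⟩ := measurable_pi_apply _
      exact h0.comp hg1 hg2
    have hmap : Measure.map (fun ω => (U ω, w n ω)) P = (Measure.map U P).prod uniformPM := by
      rw [← hlaw n]
      exact (indepFun_iff_map_prod_eq_prod_map_map hUmeas.aemeasurable
        (hwmeas n).aemeasurable).mp hUW
    set ν := Measure.map U P with hν
    have hνD : ν Dn = P (A n) := by
      rw [hν, Measure.map_apply hUmeas hDmeas, hpre]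
    have hPA1 : P (A (n+1)) = ∫⁻ v, uniformPM (Prod.mk v ⁻¹' C) ∂ν := by
      rw [← hApre, ← Measure.map_apply (hUmeas.prodMk (hwmeas n)) hCmeas, hmap,
        Measure.prod_apply hCmeas]
    -- pointwise slice bound
    have hslice : ∀ v ∈ Dn,
        ENNReal.ofReal (1 - (1/2:ℝ)^(n+1)) ≤ uniformPM (Prod.mk v ⁻¹' C) := by
      intro v hv
      set x := trajVec x₀ n v with hx
      have hxlarge : 2^n * |x₀| ≤ |x| := by
        have h := hv n le_rfl
        have he : (fun i : Fin n => v (Fin.castLE le_rfl i)) = v := rfl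
        rwa [he] at h
      have hx4 : (2:ℝ)^(n+2) < |x| := by
        have h1 : (2:ℝ)^(n+2) = 2^n * 4 := by rw [pow_succ, pow_succ]; ring
        have h2 : (2:ℝ)^n * 4 < 2^n * |x₀| :=
          mul_lt_mul_of_pos_left hx₀ (by positivity)
        linarith
      have hxpos : 0 < |x| := lt_trans (by positivity) hx4
      have hsub : {t : ℝ | 2 ≤ |1 + x * t|} ⊆ Prod.mk v ⁻¹' C := by
        intro t ht
        simp only [Set.mem_setOf_eq] at ht
        refine ⟨hv, ?_⟩
        calc (2:ℝ)^(n+1) * |x₀| = (2^n * |x₀|) * 2 := by rw [pow_succ]; ring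
          _ ≤ |x| * |1 + x * t| :=
            mul_le_mul hxlarge ht (by norm_num) (abs_nonneg _)
          _ = |x + x^2 * t| := by rw [← abs_mul]; congr 1; ring
      have h2x : (2:ℝ)/|x| ≤ (1/2)^(n+1) := by
        have hp : ((1:ℝ)/2)^(n+1) = 2/2^(n+2) := by
          rw [div_pow, one_pow, pow_succ]; ring
        rw [hp]
        exact div_le_div_of_nonneg_left (by norm_num) (by positivity) hx4.le
      calc ENNReal.ofReal (1 - (1/2:ℝ)^(n+1))
          = 1 - ENNReal.ofReal ((1/2:ℝ)^(n+1)) := by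
            rw [ENNReal.ofReal_sub _ (by positivity), ENNReal.ofReal_one]
        _ ≤ 1 - ENNReal.ofReal (2/|x|) :=
            tsub_le_tsub_left (ENNReal.ofReal_le_ofReal h2x) 1
        _ ≤ uniformPM {t : ℝ | 2 ≤ |1 + x * t|} := unif_bound x hxpos
        _ ≤ uniformPM (Prod.mk v ⁻¹' C) := measure_mono hsub
    -- integrate
    have hint : ENNReal.ofReal (1 - (1/2:ℝ)^(n+1)) * ν Dn ≤
        ∫⁻ v, uniformPM (Prod.mk v ⁻¹' C) ∂ν := by
      have h1 : ∀ v, Dn.indicator (fun _ => ENNReal.ofReal (1 - (1/2:ℝ)^(n+1))) v ≤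
          uniformPM (Prod.mk v ⁻¹' C) := by
        intro v
        by_cases hv : v ∈ Dn
        · rw [Set.indicator_of_mem hv]; exact hslice v hv
        · rw [Set.indicator_of_notMem hv]; exact zero_le
      calc ENNReal.ofReal (1 - (1/2:ℝ)^(n+1)) * ν Dn
          = ∫⁻ v, Dn.indicator (fun _ => ENNReal.ofReal (1 - (1/2:ℝ)^(n+1))) v ∂ν := by
            rw [lintegral_indicator hDmeas, setLIntegral_const]
        _ ≤ _ := lintegral_mono h1
    rw [hPA1, ← hνD]
    exact hint
  -- induction
  have hlb : ∀ n, ENNReal.ofReal (∏ j ∈ Finset.range n, (1 - (1/2:ℝ)^(j+1))) ≤ P (A n) := by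
    intro n
    induction n with
    | zero =>
        have h : A 0 = Set.univ := by
          ext ω
          simp only [hA, Set.mem_setOf_eq, Set.mem_univ, iff_true]
          intro k hk
          have : k = 0 := Nat.le_zero.mp hk
          subst this
          simp [hX, trajOneDim]
        rw [h]
        simp
    | succ n ih =>
        have hprodnn : (0:ℝ) ≤ ∏ j ∈ Finset.range n, (1 - (1/2:ℝ)^(j+1)) := by
          apply Finset.prod_nonneg
          intro j _
          have : ((1:ℝ)/2)^(j+1) ≤ 1 := by
            apply pow_le_one₀ <;> norm_num
          linarith
        rw [Finset.prod_range_succ, ENNReal.ofReal_mul hprodnn]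
        calc ENNReal.ofReal (∏ j ∈ Finset.range n, (1 - (1/2:ℝ)^(j+1))) *
              ENNReal.ofReal (1 - (1/2:ℝ)^(n+1))
            ≤ P (A n) * ENNReal.ofReal (1 - (1/2:ℝ)^(n+1)) := mul_le_mul_left ih _
          _ = ENNReal.ofReal (1 - (1/2:ℝ)^(n+1)) * P (A n) := mul_comm _ _
          _ ≤ P (A (n+1)) := hstep n
  -- pass to the limit
  have hinter : {ω | ∀ k : ℕ, 2^k * |x₀| ≤ |X k ω|} = ⋂ n, A n := by
    ext ω
    simp only [Set.mem_setOf_eq, Set.mem_iInter, hA]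
    exact ⟨fun h n k hk => h k, fun h k => h k k le_rfl⟩
  have hanti : Antitone A := by
    intro m n hmn ω hω k hk
    exact hω k (hk.trans hmn)
  have htend := tendsto_measure_iInter_atTop
    (fun n => (hAmeas n).nullMeasurableSet) hanti ⟨0, measure_ne_top P _⟩
  rw [hinter]
  refine ge_of_tendsto' htend fun n => ?_
  exact le_trans (ENNReal.ofReal_le_ofReal (prod_lb n)) (hlb n)

/-- **The example system escapes with positive probability.** For the system
`x_{k+1} = x_k + x_k² w_k` with i.i.d. disturbances uniform on `[-1,1]` and `|x₀| > 4`,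
the event `{∀ k, |X_k| > 2^{k+2}}` has probability at least `e^{−2}`; in particular
`|X_k| → ∞` with probability at least `e^{−2} > 0`, so the system is not almost-surely
reachable to any bounded target set. -/
theorem example_system_diverges_with_positive_probability
    (Ω : Type*) [MeasurableSpace Ω] (P : Measure Ω) [IsProbabilityMeasure P]
    (w : ℕ → Ω → ℝ)
    (hwmeas : ∀ k, Measurable (w k))
    (hindep : iIndepFun w P)
    (hlaw : ∀ k, Measure.map (w k) P = uniformPM)
    (x₀ : ℝ) (hx₀ : 4 < |x₀|) :
    Real.exp (-2) ≤ (P {ω | ∀ k : ℕ, (2 : ℝ) ^ (k + 2) < |trajOneDim w x₀ k ω|}).toReal ∧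
    Real.exp (-2) ≤ (P {ω | Tendsto (fun k => |trajOneDim w x₀ k ω|) atTop atTop}).toReal ∧
    0 < Real.exp (-2) ∧
    ∀ G : Set ℝ, Bornology.IsBounded G →
      ¬ (∀ y₀ : ℝ, P {ω | ∃ k : ℕ, trajOneDim w y₀ k ω ∈ G} = 1) := by
  have hkey : ∀ y₀ : ℝ, 4 < |y₀| → ENNReal.ofReal (Real.exp (-2)) ≤
      P {ω | ∀ k : ℕ, 2^k * |y₀| ≤ |trajOneDim w y₀ k ω|} :=
    fun y₀ h => key_escape P w hwmeas hindep hlaw y₀ h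
  have hgrow : ∀ (y₀ : ℝ), 4 < |y₀| → ∀ (k : ℕ) (ω : Ω),
      2^k * |y₀| ≤ |trajOneDim w y₀ k ω| → (2:ℝ)^(k+2) < |trajOneDim w y₀ k ω| := by
    intro y₀ hy₀ k ω h
    have h1 : (2:ℝ)^(k+2) = 2^k * 4 := by rw [pow_succ, pow_succ]; ring
    have h2 : (2:ℝ)^k * 4 < 2^k * |y₀| := mul_lt_mul_of_pos_left hy₀ (by positivity)
    linarith
  -- part 1
  have hsub1 : {ω | ∀ k : ℕ, 2^k * |x₀| ≤ |trajOneDim w x₀ k ω|} ⊆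
      {ω | ∀ k : ℕ, (2:ℝ)^(k+2) < |trajOneDim w x₀ k ω|} :=
    fun ω h k => hgrow x₀ hx₀ k ω (h k)
  have h1 : ENNReal.ofReal (Real.exp (-2)) ≤
      P {ω | ∀ k : ℕ, (2:ℝ)^(k+2) < |trajOneDim w x₀ k ω|} :=
    le_trans (hkey x₀ hx₀) (measure_mono hsub1)
  have htoReal : ∀ s : Set Ω, ENNReal.ofReal (Real.exp (-2)) ≤ P s →
      Real.exp (-2) ≤ (P s).toReal := by
    intro s hs
    exact (ENNReal.ofReal_le_iff_le_toReal (measure_ne_top P s)).mp hs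
  refine ⟨htoReal _ h1, ?_, Real.exp_pos _, ?_⟩
  -- part 2
  · have hsub2 : {ω | ∀ k : ℕ, (2:ℝ)^(k+2) < |trajOneDim w x₀ k ω|} ⊆
        {ω | Tendsto (fun k => |trajOneDim w x₀ k ω|) atTop atTop} := by
      intro ω h
      simp only [Set.mem_setOf_eq] at h ⊢
      have hpow : Tendsto (fun k : ℕ => (2:ℝ)^(k+2)) atTop atTop :=
        (tendsto_pow_atTop_atTop_of_one_lt (by norm_num : (1:ℝ) < 2)).comp
          (tendsto_add_atTop_nat 2)
      exact tendsto_atTop_mono (fun k => (h k).le) hpow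
    exact htoReal _ (le_trans h1 (measure_mono hsub2))
  -- part 4
  · intro G hG hall
    obtain ⟨r, hr⟩ := hG.subset_closedBall 0
    set y₀ : ℝ := max 5 (r + 1) with hy₀def
    have hy₀pos : (0:ℝ) < y₀ := lt_of_lt_of_le (by norm_num) (le_max_left _ _)
    have hy₀abs : |y₀| = y₀ := abs_of_pos hy₀pos
    have hy₀ : 4 < |y₀| := by
      rw [hy₀abs]; exact lt_of_lt_of_le (by norm_num) (le_max_left _ _)
    set T := {ω | ∀ k : ℕ, 2^k * |y₀| ≤ |trajOneDim w y₀ k ω|} with hT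
    have hTmeas : MeasurableSet T := by
      have h : T = ⋂ k : ℕ, {ω | 2^k * |y₀| ≤ |trajOneDim w y₀ k ω|} := by
        ext ω; simp [hT]
      rw [h]
      exact MeasurableSet.iInter fun k =>
        measurableSet_le measurable_const (trajOneDim_measurable w hwmeas y₀ k).abs
    have hTS : {ω | ∃ k : ℕ, trajOneDim w y₀ k ω ∈ G} ⊆ Tᶜ := by
      intro ω ⟨k, hk⟩ hωT
      have h1 : |trajOneDim w y₀ k ω| ≤ r := by
        have := hr hk
        rwa [Metric.mem_closedBall, Real.dist_eq, sub_zero] at this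
      have h2 : 2^k * |y₀| ≤ |trajOneDim w y₀ k ω| := hωT k
      have h3 : (1:ℝ) * y₀ ≤ 2^k * |y₀| := by
        rw [hy₀abs]
        exact mul_le_mul_of_nonneg_right (one_le_pow₀ (by norm_num)) hy₀pos.le
      have h4 : r + 1 ≤ y₀ := le_max_right _ _
      linarith
    have hPT : ENNReal.ofReal (Real.exp (-2)) ≤ P T := hkey y₀ hy₀
    have hPS : P {ω | ∃ k : ℕ, trajOneDim w y₀ k ω ∈ G} ≤ P Tᶜ := measure_mono hTS
    rw [hall y₀, prob_compl_eq_one_sub hTmeas] at hPS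
    have hTpos : P T ≠ 0 := by
      intro h0
      rw [h0] at hPT
      exact absurd (le_antisymm hPT zero_le).symm
        (by simpa using (ENNReal.ofReal_pos.mpr (Real.exp_pos _)).ne')
    have : (1:ENNReal) - P T < 1 :=
      ENNReal.sub_lt_self ENNReal.one_ne_top one_ne_zero hTpos
    exact absurd (lt_of_le_of_lt hPS this) (lt_irrefl _)
end

section
/- Let μ be the uniform probability measure on [−1, 1] and let U(x) = x² − 1. Then for every δ > 0 and every ε > 0 there exists x ∈ ℝ with U(x) > 0 such that μ{w : U(x + x² w) − U(x) ≤ −δ} < ε. In other words, no constant decrement δ > 0 and constant probability ε > 0 can satisfy the variant decrease condition uniformly over all states x with U(x) > 0 for this system and variant. -/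
open MeasureTheory

/-- **No constant margins for the variant of the example system.** For the system
`x_{k+1} = x_k + x_k² w_k` with uniform disturbances on `[-1,1]` and the variant
`U(x) = x² − 1`, for every `δ > 0` and `ε > 0` there is a state `x` with `U(x) > 0` whose
one-step decrease event `{w : U(x + x²w) − U(x) ≤ −δ}` has probability less than `ε`. -/
theorem no_constant_variant_margins
    (U : ℝ → ℝ) (hU : ∀ y, U y = y ^ 2 - 1) :
    ∀ δ > (0 : ℝ), ∀ ε > (0 : ℝ), ∃ x : ℝ, 0 < U x ∧
      (uniformPM {w : ℝ | U (x + x ^ 2 * w) - U x ≤ -δ}).toReal < ε := by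
  intro δ hδ ε hε
  set x : ℝ := max 2 (2 / ε) with hxdef
  have hx2 : (2 : ℝ) ≤ x := le_max_left _ _
  have hxe : 2 / ε ≤ x := le_max_right _ _
  have hx0 : (0 : ℝ) < x := by linarith
  refine ⟨x, ?_, ?_⟩
  · rw [hU]; nlinarith
  · set S : Set ℝ := {w : ℝ | U (x + x ^ 2 * w) - U x ≤ -δ} with hS
    have hsub : S ⊆ Set.Icc (-(2 / x)) 0 := by
      intro w hw
      simp only [hS, Set.mem_setOf_eq, hU] at hw
      have h1 : (x + x ^ 2 * w) ^ 2 ≤ x ^ 2 := by nlinarith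
      constructor
      · have h2 : -2 ≤ w * x := by nlinarith [sq_nonneg (x * w + 2), mul_pos hx0 hx0]
        have h3 : (-2) / x ≤ w := (div_le_iff₀ hx0).mpr h2
        rw [neg_div] at h3
        exact h3
      · nlinarith [pow_pos hx0 3, sq_nonneg (x ^ 2 * w)]
    have hmeas : uniformPM S ≤ (2 : ENNReal)⁻¹ * ENNReal.ofReal (2 / x) := by
      have h1 : uniformPM S ≤ (2 : ENNReal)⁻¹ * volume S := by
        rw [uniformPM, Measure.smul_apply, smul_eq_mul]
        exact mul_le_mul_right ((Measure.restrict_le_self) S) _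
      refine h1.trans ?_
      refine mul_le_mul_right ?_ _
      calc volume S ≤ volume (Set.Icc (-(2 / x)) 0) := measure_mono hsub
        _ = ENNReal.ofReal (0 - -(2 / x)) := by rw [Real.volume_Icc]
        _ = ENNReal.ofReal (2 / x) := by norm_num
    have hfin : ((2 : ENNReal)⁻¹ * ENNReal.ofReal (2 / x)) ≠ ⊤ := by
      exact ENNReal.mul_ne_top (by simp) ENNReal.ofReal_ne_top
    have h2 : (uniformPM S).toReal ≤ ((2 : ENNReal)⁻¹ * ENNReal.ofReal (2 / x)).toReal :=
      ENNReal.toReal_mono hfin hmeas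
    have h3 : ((2 : ENNReal)⁻¹ * ENNReal.ofReal (2 / x)).toReal = 1 / x := by
      rw [ENNReal.toReal_mul, ENNReal.toReal_inv, ENNReal.toReal_ofNat,
        ENNReal.toReal_ofReal (by positivity)]
      field_simp
    have h4 : 1 / x ≤ ε / 2 := by
      rw [div_le_iff₀ hx0]
      rw [div_le_iff₀ hε] at hxe
      nlinarith
    calc (uniformPM S).toReal ≤ 1 / x := by rw [← h3]; exact h2
      _ < ε := by linarith
end
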